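/- Let φ and ψ be linear fractional self-maps of the unit ball B_N and let σ be the Krein adjoint of ψ. Then [C_ψ*, C_φ] is compact on the Dirichlet space D(B_N) if and only if C_{σ∘φ} − C_{φ∘σ} is compact on D(B_N). Moreover, C_ψ* C_φ is compact on D(B_N) if and only if C_{φ∘σ} is compact, and C_φ C_ψ* is compact if and only if C_{σ∘φ} is compact. -/

import Mathlib

open Filter MeasureTheory Metric Set
open scoped ComplexInnerProductSpace Topology

noncomputable section

/-- Borel measurable structure on `ℂ^N`. -/
instance (N : ℕ) : MeasurableSpace (EuclideanSpace ℂ (Fin N)) := borel _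

instance (N : ℕ) : BorelSpace (EuclideanSpace ℂ (Fin N)) := ⟨rfl⟩

/-- The open unit ball `B_N` of `ℂ^N`. -/
abbrev Ball (N : ℕ) : Set (EuclideanSpace ℂ (Fin N)) := Metric.ball 0 1

/-- An abstract presentation of the Dirichlet space `𝒟(B_N)`: the reproducing-kernel Hilbert
space of holomorphic functions on `B_N` with kernel `K_w(z) = 1 + log (1/(1 - ⟨z,w⟩))`.
Injectivity of evaluation forces the kernels to be total, so such a structure determines the
space uniquely up to canonical unitary equivalence. -/
structure DirichletSpace (N : ℕ) where
  (H : Type)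
  [grp : NormedAddCommGroup H]
  [ips : InnerProductSpace ℂ H]
  [cpl : CompleteSpace H]
  eval : H → EuclideanSpace ℂ (Fin N) → ℂ
  eval_add : ∀ f g : H, ∀ z, eval (f + g) z = eval f z + eval g z
  eval_smul : ∀ (c : ℂ) (f : H) (z : EuclideanSpace ℂ (Fin N)), eval (c • f) z = c * eval f z
  holo : ∀ f : H, DifferentiableOn ℂ (eval f) (Ball N)
  eval_injective : ∀ f g : H, (∀ z ∈ Ball N, eval f z = eval g z) → f = g
  kernel : EuclideanSpace ℂ (Fin N) → H
  eval_kernel : ∀ w ∈ Ball N, ∀ z ∈ Ball N,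
    eval (kernel w) z = 1 + Complex.log (1 - ⟪w, z⟫)⁻¹
  reproducing : ∀ (f : H), ∀ w ∈ Ball N, ⟪kernel w, f⟫ = eval f w

attribute [instance] DirichletSpace.grp DirichletSpace.ips DirichletSpace.cpl

/-- `T` is the composition operator `C_φ : f ↦ f ∘ φ` on `S`. -/
def DirichletSpace.IsCompositionOperator {N : ℕ} (S : DirichletSpace N)
    (φ : EuclideanSpace ℂ (Fin N) → EuclideanSpace ℂ (Fin N)) (T : S.H →L[ℂ] S.H) : Prop :=
  ∀ f : S.H, ∀ z ∈ Ball N, S.eval (T f) z = S.eval f (φ z)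

/-- The data of a linear fractional map `φ(z) = (Az + B)/(⟨z,C⟩ + d)` of `ℂ^N`. -/
structure BallLFT (N : ℕ) where
  A : Matrix (Fin N) (Fin N) ℂ
  B : EuclideanSpace ℂ (Fin N)
  C : EuclideanSpace ℂ (Fin N)
  d : ℂ

/-- The map `z ↦ (Az + B)/(⟨z,C⟩ + d)` associated to a linear fractional map. -/
def BallLFT.toFun {N : ℕ} (L : BallLFT N) (z : EuclideanSpace ℂ (Fin N)) :
    EuclideanSpace ℂ (Fin N) :=
  (⟪L.C, z⟫ + L.d)⁻¹ •
    ((WithLp.equiv 2 (Fin N → ℂ)).symm (L.A.mulVec (WithLp.equiv 2 (Fin N → ℂ) z)) + L.B)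

/-- The Krein adjoint `σ(z) = (A*z - C)/(⟨z,-B⟩ + conj d)` of a linear fractional map. -/
def BallLFT.krein {N : ℕ} (L : BallLFT N) : BallLFT N :=
  ⟨L.A.conjTranspose, -L.C, -L.B, (starRingEnd ℂ) L.d⟩

/-- `L` is a linear fractional self-map of the unit ball `B_N`. -/
def BallLFT.IsSelfMap {N : ℕ} (L : BallLFT N) : Prop :=
  (∀ z ∈ Ball N, ⟪L.C, z⟫ + L.d ≠ 0) ∧ Set.MapsTo L.toFun (Ball N) (Ball N)

/-- `‖φ‖_∞ = sup_{z ∈ B_N} |φ(z)|`. -/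
def supNorm {N : ℕ} (φ : EuclideanSpace ℂ (Fin N) → EuclideanSpace ℂ (Fin N)) : ℝ :=
  sSup ((fun z => ‖φ z‖) '' Ball N)

abbrev Ball' (N : ℕ) : Set (EuclideanSpace ℂ (Fin N)) := Ball N

namespace DCAux

variable {N : ℕ}

lemma zero_mem_ball : (0 : EuclideanSpace ℂ (Fin N)) ∈ Ball' N := by
  simp [Metric.mem_ball]

lemma norm_inner_lt_one {a b : EuclideanSpace ℂ (Fin N)} (ha : a ∈ Ball' N) (hb : b ∈ Ball' N) :
    ‖(⟪a, b⟫ : ℂ)‖ < 1 := by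
  rw [mem_ball_zero_iff] at ha hb
  calc ‖(⟪a, b⟫ : ℂ)‖ ≤ ‖a‖ * ‖b‖ := norm_inner_le_norm a b
    _ < 1 := by nlinarith [norm_nonneg a, norm_nonneg b]

lemma re_one_sub_pos {x : ℂ} (h : ‖x‖ < 1) : 0 < (1 - x).re := by
  have h1 : |x.re| ≤ ‖x‖ := Complex.abs_re_le_norm x
  have : (1 - x).re = 1 - x.re := by simp [Complex.sub_re]
  rw [this]
  cases abs_le.1 h1 with
  | intro h2 h3 => linarith

lemma inv_re_pos {x : ℂ} (h : 0 < x.re) : 0 < x⁻¹.re := by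
  have hx : x ≠ 0 := fun h0 => by simp [h0] at h
  rw [Complex.inv_re]
  exact div_pos h (Complex.normSq_pos.2 hx)

lemma ne_zero_of_re_pos {x : ℂ} (h : 0 < x.re) : x ≠ 0 :=
  fun h0 => by simp [h0] at h

lemma mem_slitPlane_of_re_pos {x : ℂ} (h : 0 < x.re) : x ∈ Complex.slitPlane :=
  Complex.mem_slitPlane_iff.2 (Or.inl h)

lemma arg_ne_pi_of_re_pos {x : ℂ} (h : 0 < x.re) : x.arg ≠ Real.pi := by
  intro hpi
  rw [Complex.arg_eq_pi_iff] at hpi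
  linarith [hpi.1]

lemma conj_log_inv {x : ℂ} (h : 0 < x.re) :
    (starRingEnd ℂ) (Complex.log x⁻¹) = Complex.log ((starRingEnd ℂ) x)⁻¹ := by
  have h2 : 0 < (x⁻¹).re := inv_re_pos h
  rw [← map_inv₀, Complex.log_conj _ (arg_ne_pi_of_re_pos h2)]

lemma eqOn_zero_of_exp_eq_one {E : Type*} [TopologicalSpace E] {s : Set E}
    (hs : IsPreconnected s) {G : E → ℂ} (hG : ContinuousOn G s)
    (hexp : ∀ z ∈ s, Complex.exp (G z) = 1) {z₀ : E} (hz₀ : z₀ ∈ s) (h0 : G z₀ = 0) :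
    ∀ z ∈ s, G z = 0 := by
  have himg : IsPreconnected (G '' s) := hs.image G hG
  have hmem : ∀ x ∈ G '' s, ∃ n : ℤ, x = (n : ℂ) * (2 * Real.pi * Complex.I) := by
    rintro x ⟨z, hz, rfl⟩
    exact Complex.exp_eq_one_iff.1 (hexp z hz)
  have hnorm : ∀ n : ℤ, n ≠ 0 → 1 < ‖(n : ℂ) * (2 * Real.pi * Complex.I)‖ := by
    intro n hn
    have h1 : (1 : ℝ) ≤ |(n : ℝ)| := by
      rw [← Int.cast_abs]
      exact_mod_cast Int.one_le_abs hn
    have h2 : ‖(n : ℂ) * (2 * Real.pi * Complex.I)‖ = |(n : ℝ)| * (2 * Real.pi) := by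
      rw [norm_mul]
      simp [Complex.norm_intCast, abs_of_pos Real.pi_pos, Real.pi_pos.le]
    rw [h2]
    nlinarith [Real.pi_gt_three]
  set v : Set ℂ := {x | 1 < ‖x‖} with hv
  have hvopen : IsOpen v := isOpen_lt continuous_const continuous_norm
  by_contra hcon
  push_neg at hcon
  obtain ⟨z₁, hz₁, hGz₁⟩ := hcon
  have h1v : G z₁ ∈ v := by
    obtain ⟨n, hn⟩ := hmem _ ⟨z₁, hz₁, rfl⟩
    have hn0 : n ≠ 0 := by
      rintro rfl
      simp at hn
      exact hGz₁ hn
    rw [hn]; exact hnorm n hn0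
  have hsub : G '' s ⊆ Metric.ball 0 1 ∪ v := by
    intro x hx
    obtain ⟨n, rfl⟩ := hmem x hx
    rcases eq_or_ne n 0 with rfl | hn
    · left; simp [mem_ball_zero_iff]
    · right; exact hnorm n hn
  obtain ⟨x, -, hx1, hx2⟩ :=
    himg (Metric.ball 0 1) v Metric.isOpen_ball hvopen hsub
      ⟨0, ⟨z₀, hz₀, h0⟩, by simp⟩ ⟨G z₁, ⟨z₁, hz₁, rfl⟩, h1v⟩
  rw [mem_ball_zero_iff] at hx1
  exact absurd hx1 (not_lt.2 hx2.le)

lemma rankOne_compact {H : Type*} [NormedAddCommGroup H] [InnerProductSpace ℂ H]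
    [CompleteSpace H] (a b : H) :
    IsCompactOperator (fun f : H => (⟪a, f⟫ : ℂ) • b) := by
  refine ⟨(fun c : ℂ => c • b) '' Metric.closedBall 0 1,
    (isCompact_closedBall 0 1).image (continuous_id.smul continuous_const), ?_⟩
  have hc : Continuous fun f : H => (⟪a, f⟫ : ℂ) :=
    continuous_const.inner continuous_id
  have hmem : (fun f : H => (⟪a, f⟫ : ℂ)) ⁻¹' Metric.closedBall 0 1 ∈ 𝓝 (0 : H) := by
    apply hc.continuousAt.preimage_mem_nhds
    have : (⟪a, (0 : H)⟫ : ℂ) = 0 := inner_zero_right a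
    rw [this]
    exact Metric.closedBall_mem_nhds 0 one_pos
  filter_upwards [hmem] with f hf
  exact ⟨⟪a, f⟫, hf, rfl⟩

end DCAux

namespace DCAux

open Complex

variable {N : ℕ}

lemma toFun_eq (L : BallLFT N) (z : EuclideanSpace ℂ (Fin N)) :
    L.toFun z = (⟪L.C, z⟫ + L.d)⁻¹ • (Matrix.toEuclideanLin L.A z + L.B) := by
  rw [BallLFT.toFun, Matrix.toEuclideanLin_apply]
  rfl

lemma inner_lin_adj (A : Matrix (Fin N) (Fin N) ℂ) (w z : EuclideanSpace ℂ (Fin N)) :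
    ⟪Matrix.toEuclideanLin A.conjTranspose w, z⟫ = ⟪w, Matrix.toEuclideanLin A z⟫ := by
  simp only [PiLp.inner_apply, Matrix.toEuclideanLin_apply, PiLp.toLp_apply,
    Matrix.mulVec, dotProduct, Matrix.conjTranspose_apply,
    RCLike.inner_apply, map_sum, map_mul, Complex.conj_conj, Finset.mul_sum, Finset.sum_mul,
    RCLike.star_def]
  rw [Finset.sum_comm]
  apply Finset.sum_congr rfl
  intro i _
  apply Finset.sum_congr rfl
  intro j _
  ring

lemma inner_toFun (L : BallLFT N) (w z : EuclideanSpace ℂ (Fin N)) :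
    (⟪w, L.toFun z⟫ : ℂ)
      = (⟪L.C, z⟫ + L.d)⁻¹ * (⟪w, Matrix.toEuclideanLin L.A z⟫ + ⟪w, L.B⟫) := by
  rw [toFun_eq, inner_smul_right, inner_add_right]

lemma krein_denom_conj (ψ : BallLFT N) (w : EuclideanSpace ℂ (Fin N)) :
    (starRingEnd ℂ) ((⟪ψ.krein.C, w⟫ : ℂ) + ψ.krein.d) = ψ.d - ⟪w, ψ.B⟫ := by
  show (starRingEnd ℂ) ((⟪(-ψ.B : EuclideanSpace ℂ (Fin N)), w⟫ : ℂ) + (starRingEnd ℂ) ψ.d)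
      = ψ.d - ⟪w, ψ.B⟫
  rw [map_add, inner_conj_symm, Complex.conj_conj, inner_neg_right]
  ring

lemma toFun_krein_inner (ψ : BallLFT N) (w z : EuclideanSpace ℂ (Fin N)) :
    (⟪ψ.krein.toFun w, z⟫ : ℂ)
      = (ψ.d - ⟪w, ψ.B⟫)⁻¹ * (⟪w, Matrix.toEuclideanLin ψ.A z⟫ - ⟪ψ.C, z⟫) := by
  rw [toFun_eq, inner_smul_left, inner_add_left, map_inv₀, krein_denom_conj]
  congr 1
  show (⟪Matrix.toEuclideanLin ψ.A.conjTranspose w, z⟫ : ℂ)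
      + ⟪(-ψ.C : EuclideanSpace ℂ (Fin N)), z⟫ = _
  rw [inner_lin_adj, inner_neg_left, sub_eq_add_neg]

lemma one_sub_inner_toFun (ψ : BallLFT N) (w z : EuclideanSpace ℂ (Fin N))
    (hP : (⟪ψ.C, z⟫ : ℂ) + ψ.d ≠ 0) :
    1 - ⟪w, ψ.toFun z⟫
      = ((⟪ψ.C, z⟫ + ψ.d) + (ψ.d - ⟪w, ψ.B⟫) - ⟪w, Matrix.toEuclideanLin ψ.A z⟫ - ψ.d)
        / (⟪ψ.C, z⟫ + ψ.d) := by
  rw [inner_toFun]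
  generalize (⟪ψ.C, z⟫ : ℂ) = p at *
  generalize (⟪w, Matrix.toEuclideanLin ψ.A z⟫ : ℂ) = r
  generalize (⟪w, ψ.B⟫ : ℂ) = b
  field_simp
  ring

lemma one_sub_inner_krein (ψ : BallLFT N) (w z : EuclideanSpace ℂ (Fin N))
    (hQ : ψ.d - (⟪w, ψ.B⟫ : ℂ) ≠ 0) :
    1 - ⟪ψ.krein.toFun w, z⟫
      = ((⟪ψ.C, z⟫ + ψ.d) + (ψ.d - ⟪w, ψ.B⟫) - ⟪w, Matrix.toEuclideanLin ψ.A z⟫ - ψ.d)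
        / (ψ.d - ⟪w, ψ.B⟫) := by
  rw [toFun_krein_inner]
  generalize (⟪ψ.C, z⟫ : ℂ) = p at *
  generalize (⟪w, Matrix.toEuclideanLin ψ.A z⟫ : ℂ) = r
  generalize hb : (⟪w, ψ.B⟫ : ℂ) = b at *
  field_simp
  ring

lemma d_ne_zero (ψ : BallLFT N) (hψ : ψ.IsSelfMap) : ψ.d ≠ 0 := by
  have := hψ.1 0 zero_mem_ball
  simpa using this

lemma Q_ne_zero (ψ : BallLFT N) (hσ : ψ.krein.IsSelfMap) {w : EuclideanSpace ℂ (Fin N)}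
    (hw : w ∈ Ball' N) : ψ.d - (⟪w, ψ.B⟫ : ℂ) ≠ 0 := by
  have h := hσ.1 w hw
  intro h0
  apply h
  have h1 := krein_denom_conj ψ w
  rw [h0, map_eq_zero_iff _ (starRingEnd ℂ).injective] at h1
  exact h1

end DCAux

namespace DCAux

variable {N : ℕ}

lemma continuousOn_toFun (L : BallLFT N) (h : ∀ z ∈ Ball' N, (⟪L.C, z⟫ : ℂ) + L.d ≠ 0) :
    ContinuousOn L.toFun (Ball' N) := by
  have hc : Continuous fun z : EuclideanSpace ℂ (Fin N) => (⟪L.C, z⟫ : ℂ) + L.d :=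
    (continuous_const.inner continuous_id).add continuous_const
  have hl : Continuous fun z : EuclideanSpace ℂ (Fin N) =>
      Matrix.toEuclideanLin L.A z + L.B :=
    ((Matrix.toEuclideanLin L.A).continuous_of_finiteDimensional).add continuous_const
  intro z hz
  have hcw : ContinuousWithinAt (fun z : EuclideanSpace ℂ (Fin N) =>
      ((⟪L.C, z⟫ : ℂ) + L.d)⁻¹ • (Matrix.toEuclideanLin L.A z + L.B)) (Ball' N) z :=
    (hc.continuousWithinAt.inv₀ (h z hz)).smul hl.continuousWithinAt
  exact hcw.congr (fun y _ => toFun_eq L y) (toFun_eq L z)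

lemma continuousOn_logterm {a : EuclideanSpace ℂ (Fin N)} (ha : a ∈ Ball' N)
    {g : EuclideanSpace ℂ (Fin N) → EuclideanSpace ℂ (Fin N)}
    (hg : ContinuousOn g (Ball' N)) (hmap : Set.MapsTo g (Ball' N) (Ball' N)) :
    ContinuousOn (fun z => Complex.log (1 - ⟪a, g z⟫)⁻¹) (Ball' N) := by
  have h1 : ContinuousOn (fun z => (1 - ⟪a, g z⟫ : ℂ)) (Ball' N) :=
    continuousOn_const.sub ((continuous_const.inner continuous_id).comp_continuousOn hg)
  have h2 : ContinuousOn (fun z => (1 - ⟪a, g z⟫ : ℂ)⁻¹) (Ball' N) :=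
    h1.inv₀ fun z hz => ne_zero_of_re_pos (re_one_sub_pos (norm_inner_lt_one ha (hmap hz)))
  exact fun z hz => (h2 z hz).clog
    (mem_slitPlane_of_re_pos (inv_re_pos (re_one_sub_pos (norm_inner_lt_one ha (hmap hz)))))

lemma eval_sub (S : DirichletSpace N) (f g : S.H) (z : EuclideanSpace ℂ (Fin N)) :
    S.eval (f - g) z = S.eval f z - S.eval g z := by
  have h := S.eval_add (f - g) g z
  rw [sub_add_cancel] at h
  rw [h]; ring

lemma G_vanishes (ψ : BallLFT N) (hψ : ψ.IsSelfMap) (hσ : ψ.krein.IsSelfMap)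
    {w : EuclideanSpace ℂ (Fin N)} (hw : w ∈ Ball' N) :
    ∀ z ∈ Ball' N,
      Complex.log (1 - ⟪w, ψ.toFun z⟫)⁻¹ - Complex.log (1 - ⟪ψ.krein.toFun w, z⟫)⁻¹
        + Complex.log (1 - ⟪ψ.krein.toFun 0, z⟫)⁻¹
        - Complex.log (1 - ⟪w, ψ.toFun 0⟫)⁻¹ = 0 := by
  have hd : ψ.d ≠ 0 := d_ne_zero ψ hψ
  have hQ : ψ.d - (⟪w, ψ.B⟫ : ℂ) ≠ 0 := Q_ne_zero ψ hσ hw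
  apply eqOn_zero_of_exp_eq_one (convex_ball (0 : EuclideanSpace ℂ (Fin N)) 1).isPreconnected
  · exact ((((continuousOn_logterm hw (continuousOn_toFun ψ hψ.1) hψ.2).sub
      (continuousOn_logterm (hσ.2 hw) continuousOn_id (fun _ h => h))).add
      (continuousOn_logterm (hσ.2 zero_mem_ball) continuousOn_id (fun _ h => h))).sub
      continuousOn_const)
  · intro z hz
    have hu : 0 < (1 - (⟪w, ψ.toFun z⟫ : ℂ)).re :=
      re_one_sub_pos (norm_inner_lt_one hw (hψ.2 hz))
    have hv : 0 < (1 - (⟪ψ.krein.toFun w, z⟫ : ℂ)).re :=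
      re_one_sub_pos (norm_inner_lt_one (hσ.2 hw) hz)
    have hv0 : 0 < (1 - (⟪ψ.krein.toFun 0, z⟫ : ℂ)).re :=
      re_one_sub_pos (norm_inner_lt_one (hσ.2 zero_mem_ball) hz)
    have hu0 : 0 < (1 - (⟪w, ψ.toFun 0⟫ : ℂ)).re :=
      re_one_sub_pos (norm_inner_lt_one hw (hψ.2 zero_mem_ball))
    rw [sub_eq_add_neg, sub_eq_add_neg,
      ← Complex.log_inv _ (arg_ne_pi_of_re_pos (inv_re_pos hv)),
      ← Complex.log_inv _ (arg_ne_pi_of_re_pos (inv_re_pos hu0)), inv_inv, inv_inv,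
      Complex.exp_add, Complex.exp_add, Complex.exp_add,
      Complex.exp_log (inv_ne_zero (ne_zero_of_re_pos hu)),
      Complex.exp_log (ne_zero_of_re_pos hv),
      Complex.exp_log (inv_ne_zero (ne_zero_of_re_pos hv0)),
      Complex.exp_log (ne_zero_of_re_pos hu0)]
    have hP : (⟪ψ.C, z⟫ : ℂ) + ψ.d ≠ 0 := hψ.1 z hz
    have e1 := one_sub_inner_toFun ψ w z hP
    have e2 := one_sub_inner_krein ψ w z hQ
    have e3 : 1 - (⟪ψ.krein.toFun 0, z⟫ : ℂ) = ((⟪ψ.C, z⟫ : ℂ) + ψ.d) / ψ.d := by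
      have := one_sub_inner_krein ψ 0 z (by simpa using hd)
      simpa using this
    have e4 : 1 - (⟪w, ψ.toFun 0⟫ : ℂ) = (ψ.d - ⟪w, ψ.B⟫) / ψ.d := by
      have := one_sub_inner_toFun ψ w 0 (by simpa using hd)
      simpa using this
    rw [e1, e2, e3, e4]
    have hM : (⟪ψ.C, z⟫ + ψ.d) + (ψ.d - ⟪w, ψ.B⟫)
        - (⟪w, Matrix.toEuclideanLin ψ.A z⟫ : ℂ) - ψ.d ≠ 0 := by
      intro h0
      rw [e1, h0, zero_div] at hu
      simp at hu
    generalize (⟪ψ.C, z⟫ : ℂ) + ψ.d = P at *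
    generalize (ψ.d - (⟪w, ψ.B⟫ : ℂ)) = Q at *
    generalize (P + Q - (⟪w, Matrix.toEuclideanLin ψ.A z⟫ : ℂ) - ψ.d) = M at *
    field_simp
  · exact zero_mem_ball
  · simp [inner_zero_right, Complex.log_one]

lemma kernel_transform (S : DirichletSpace N) (ψ : BallLFT N) (hψ : ψ.IsSelfMap)
    (hσ : ψ.krein.IsSelfMap) (Cψ : S.H →L[ℂ] S.H)
    (hCψ : S.IsCompositionOperator ψ.toFun Cψ)
    {w : EuclideanSpace ℂ (Fin N)} (hw : w ∈ Ball' N) :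
    Cψ (S.kernel w) = S.kernel (ψ.krein.toFun w) - S.kernel (ψ.krein.toFun 0)
      + (starRingEnd ℂ) (1 + Complex.log (1 - ⟪ψ.toFun 0, w⟫)⁻¹) • S.kernel 0 := by
  have hψ0 : ψ.toFun 0 ∈ Ball' N := hψ.2 zero_mem_ball
  have hconj : (starRingEnd ℂ) (1 + Complex.log (1 - ⟪ψ.toFun 0, w⟫)⁻¹)
      = 1 + Complex.log (1 - ⟪w, ψ.toFun 0⟫)⁻¹ := by
    rw [map_add, map_one, conj_log_inv (re_one_sub_pos (norm_inner_lt_one hψ0 hw)),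
      map_sub, map_one, inner_conj_symm]
  apply S.eval_injective
  intro z hz
  rw [hCψ _ z hz, S.eval_kernel w hw _ (hψ.2 hz), S.eval_add, eval_sub, S.eval_smul,
    S.eval_kernel _ (hσ.2 hw) _ hz, S.eval_kernel _ (hσ.2 zero_mem_ball) _ hz,
    S.eval_kernel 0 zero_mem_ball _ hz, hconj]
  have h0 : (⟪(0 : EuclideanSpace ℂ (Fin N)), z⟫ : ℂ) = 0 := inner_zero_left _
  rw [h0]
  have hG := G_vanishes ψ hψ hσ hw z hz
  rw [sub_zero, inv_one, Complex.log_one]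
  linear_combination hG

lemma adjoint_eval (S : DirichletSpace N) (ψ : BallLFT N) (hψ : ψ.IsSelfMap)
    (hσ : ψ.krein.IsSelfMap) (Cψ : S.H →L[ℂ] S.H)
    (hCψ : S.IsCompositionOperator ψ.toFun Cψ) (f : S.H)
    {w : EuclideanSpace ℂ (Fin N)} (hw : w ∈ Ball' N) :
    S.eval ((ContinuousLinearMap.adjoint Cψ) f) w
      = S.eval f (ψ.krein.toFun w) - S.eval f (ψ.krein.toFun 0)
        + (1 + Complex.log (1 - ⟪ψ.toFun 0, w⟫)⁻¹) * S.eval f 0 := by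
  rw [← S.reproducing _ w hw, ContinuousLinearMap.adjoint_inner_right,
    kernel_transform S ψ hψ hσ Cψ hCψ hw, inner_add_left, inner_sub_left, inner_smul_left,
    Complex.conj_conj, S.reproducing f _ (hσ.2 hw), S.reproducing f _ (hσ.2 zero_mem_ball),
    S.reproducing f 0 zero_mem_ball]

lemma compact_shift {H : Type*} [NormedAddCommGroup H] [InnerProductSpace ℂ H]
    (T D K : H →L[ℂ] H) (h : T = D + K) (hK : IsCompactOperator ⇑K) :
    IsCompactOperator ⇑T ↔ IsCompactOperator ⇑D := by
  constructor
  · intro hT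
    have hD : D = T - K := by rw [h]; abel
    have : ⇑D = fun x => T x - K x := by rw [hD]; ext x; simp
    rw [this]
    exact hT.sub hK
  · intro hD
    have : ⇑T = fun x => D x + K x := by rw [h]; ext x; simp
    rw [this]
    exact hD.add hK

lemma compact_neg_iff {H : Type*} [NormedAddCommGroup H] [InnerProductSpace ℂ H]
    (T : H →L[ℂ] H) : IsCompactOperator ⇑(-T) ↔ IsCompactOperator ⇑T := by
  have hc : ⇑(-T) = fun x => -(T x) := by ext x; simp
  rw [hc]
  constructor
  · intro h
    have h2 := h.neg
    have h3 : (-fun x => -(T x) : H → H) = fun x => T x := by funext x; simp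
    rwa [h3] at h2
  · intro h; exact h.neg

lemma smulRight_compact {H : Type*} [NormedAddCommGroup H] [InnerProductSpace ℂ H]
    [CompleteSpace H] (a b : H) :
    IsCompactOperator ⇑((innerSL ℂ a).smulRight b) := by
  have hc : ⇑((innerSL ℂ a).smulRight b) = fun f : H => (⟪a, f⟫ : ℂ) • b := by
    ext f; simp
  rw [hc]
  exact rankOne_compact a b

end DCAux

/-- Let `φ, ψ` be linear fractional self-maps of `B_N` and `σ` the Krein
adjoint of `ψ`.  Then `[C_ψ*, C_φ]` is compact on the Dirichlet space `𝒟(B_N)` if and only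
if `C_{σ∘φ} - C_{φ∘σ}` is compact.  Moreover `C_ψ* C_φ` is compact iff `C_{φ∘σ}` is compact,
and `C_φ C_ψ*` is compact iff `C_{σ∘φ}` is compact. -/
theorem dirichlet_commutator_compact_iff_difference_compact
    (N : ℕ) (S : DirichletSpace N)
    (φ ψ : BallLFT N) (hφ : φ.IsSelfMap) (hψ : ψ.IsSelfMap) (hσ : ψ.krein.IsSelfMap)
    (Cφ Cψ Cσφ Cφσ : S.H →L[ℂ] S.H)
    (hCφ : S.IsCompositionOperator φ.toFun Cφ) (hCψ : S.IsCompositionOperator ψ.toFun Cψ)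
    (hCσφ : S.IsCompositionOperator (fun z => ψ.krein.toFun (φ.toFun z)) Cσφ)
    (hCφσ : S.IsCompositionOperator (fun z => φ.toFun (ψ.krein.toFun z)) Cφσ) :
    (IsCompactOperator
        ⇑((ContinuousLinearMap.adjoint Cψ).comp Cφ -
          Cφ.comp (ContinuousLinearMap.adjoint Cψ)) ↔
      IsCompactOperator ⇑(Cσφ - Cφσ)) ∧
    (IsCompactOperator ⇑((ContinuousLinearMap.adjoint Cψ).comp Cφ) ↔
      IsCompactOperator ⇑Cφσ) ∧
    (IsCompactOperator ⇑(Cφ.comp (ContinuousLinearMap.adjoint Cψ)) ↔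
      IsCompactOperator ⇑Cσφ) := by
  have h0 : (0 : EuclideanSpace ℂ (Fin N)) ∈ Ball N := DCAux.zero_mem_ball
  have hψ0 : ψ.toFun 0 ∈ Ball N := hψ.2 h0
  have hσ0 : ψ.krein.toFun 0 ∈ Ball N := hσ.2 h0
  have hφ0 : φ.toFun 0 ∈ Ball N := hφ.2 h0
  have hφσ0 : φ.toFun (ψ.krein.toFun 0) ∈ Ball N := hφ.2 hσ0
  set R1 : S.H →L[ℂ] S.H :=
    (innerSL ℂ (S.kernel (φ.toFun 0))).smulRight (S.kernel (ψ.toFun 0)) with hR1def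
  set R1' : S.H →L[ℂ] S.H :=
    (innerSL ℂ (S.kernel (φ.toFun (ψ.krein.toFun 0)))).smulRight (S.kernel 0) with hR1'def
  set R2 : S.H →L[ℂ] S.H :=
    (innerSL ℂ (S.kernel 0)).smulRight (Cφ (S.kernel (ψ.toFun 0))) with hR2def
  set R2' : S.H →L[ℂ] S.H :=
    (innerSL ℂ (S.kernel (ψ.krein.toFun 0))).smulRight (S.kernel 0) with hR2'def
  have coe_sub : ∀ X Y : S.H →L[ℂ] S.H, ⇑(X - Y) = fun f => X f - Y f := by
    intro X Y; ext f; simp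
  have hA : (ContinuousLinearMap.adjoint Cψ).comp Cφ = Cφσ + (R1 - R1') := by
    ext f
    apply S.eval_injective
    intro w hw
    rw [ContinuousLinearMap.comp_apply,
      DCAux.adjoint_eval S ψ hψ hσ Cψ hCψ (Cφ f) hw,
      hCφ f _ (hσ.2 hw), hCφ f _ hσ0, hCφ f 0 h0,
      ContinuousLinearMap.add_apply, S.eval_add, hCφσ f w hw,
      ContinuousLinearMap.sub_apply, DCAux.eval_sub, hR1def, hR1'def,
      ContinuousLinearMap.smulRight_apply, ContinuousLinearMap.smulRight_apply,
      innerSL_apply_apply, innerSL_apply_apply, S.eval_smul, S.eval_smul,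
      S.eval_kernel _ hψ0 _ hw, S.eval_kernel 0 h0 _ hw,
      S.reproducing f _ hφ0, S.reproducing f _ hφσ0]
    have hz0 : (⟪(0 : EuclideanSpace ℂ (Fin N)), w⟫ : ℂ) = 0 := inner_zero_left _
    rw [hz0, sub_zero, inv_one, Complex.log_one]
    ring
  have hB : Cφ.comp (ContinuousLinearMap.adjoint Cψ) = Cσφ + (R2 - R2') := by
    ext f
    apply S.eval_injective
    intro w hw
    rw [ContinuousLinearMap.comp_apply, hCφ _ w hw,
      DCAux.adjoint_eval S ψ hψ hσ Cψ hCψ f (hφ.2 hw),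
      ContinuousLinearMap.add_apply, S.eval_add, hCσφ f w hw,
      ContinuousLinearMap.sub_apply, DCAux.eval_sub, hR2def, hR2'def,
      ContinuousLinearMap.smulRight_apply, ContinuousLinearMap.smulRight_apply,
      innerSL_apply_apply, innerSL_apply_apply, S.eval_smul, S.eval_smul,
      hCφ (S.kernel (ψ.toFun 0)) w hw, S.eval_kernel _ hψ0 _ (hφ.2 hw),
      S.eval_kernel 0 h0 _ hw, S.reproducing f 0 h0, S.reproducing f _ hσ0]
    have hz0 : (⟪(0 : EuclideanSpace ℂ (Fin N)), w⟫ : ℂ) = 0 := inner_zero_left _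
    rw [hz0, sub_zero, inv_one, Complex.log_one]
    ring
  have hK1 : IsCompactOperator ⇑(R1 - R1') := by
    rw [coe_sub]
    exact (DCAux.smulRight_compact _ _).sub (DCAux.smulRight_compact _ _)
  have hK2 : IsCompactOperator ⇑(R2 - R2') := by
    rw [coe_sub]
    exact (DCAux.smulRight_compact _ _).sub (DCAux.smulRight_compact _ _)
  have hK12 : IsCompactOperator ⇑((R1 - R1') - (R2 - R2')) := by
    rw [coe_sub]
    exact hK1.sub hK2
  have hcomm : (ContinuousLinearMap.adjoint Cψ).comp Cφ -
      Cφ.comp (ContinuousLinearMap.adjoint Cψ)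
      = -(Cσφ - Cφσ) + ((R1 - R1') - (R2 - R2')) := by
    rw [hA, hB]; abel
  refine ⟨?_, DCAux.compact_shift _ Cφσ _ hA hK1, DCAux.compact_shift _ Cσφ _ hB hK2⟩
  exact (DCAux.compact_shift _ (-(Cσφ - Cφσ)) _ hcomm hK12).trans
    (DCAux.compact_neg_iff (Cσφ - Cφσ))
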